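/- For every j ≥ 0 and all x, y ∈ ℝ^d, P_j(dν; x, y) = P_j(dμ; x, y) − 𝕂_j(ξ,x)^T (I_N + Λ 𝐊_j)^{−1} Λ 𝕂_j(ξ,y) + 𝕂_{j−1}(ξ,x)^T (I_N + Λ 𝐊_{j−1})^{−1} Λ 𝕂_{j−1}(ξ,y), where P_j(dμ; x, y) = K_j(dμ; x, y) − K_{j−1}(dμ; x, y) and P_j(dν; x, y) = K_j(dν; x, y) − K_{j−1}(dν; x, y) are the reproducing kernels of the orthogonal complement of Π_{j−1}^d in Π_j^d with respect to ⟨·,·⟩_μ and ⟨·,·⟩_ν respectively (with K_{−1} = 0, 𝐊_{−1} = 0, 𝕂_{−1} = 0). -/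

import Mathlib

open MeasureTheory MvPolynomial Matrix Finset

noncomputable section

/-- The space `Π_n^d` of real polynomials in `d` variables of total degree `≤ n`. -/
def piDeg (d n : ℕ) : Submodule ℝ (MvPolynomial (Fin d) ℝ) :=
  MvPolynomial.restrictTotalDegree (Fin d) ℝ n

/-- The inner product `⟨p, q⟩_μ = ∫ p q dμ`. -/
def muInner {d : ℕ} (μ : Measure (Fin d → ℝ)) (p q : MvPolynomial (Fin d) ℝ) : ℝ :=
  ∫ x, eval x p * eval x q ∂μ

/-- The inner product `⟨p, q⟩_ν = ⟨p, q⟩_μ + 𝐩(ξ)^T Λ 𝐪(ξ)`. -/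
def nuInner {d N : ℕ} (μ : Measure (Fin d → ℝ)) (ξ : Fin N → (Fin d → ℝ))
    (Λ : Matrix (Fin N) (Fin N) ℝ) (p q : MvPolynomial (Fin d) ℝ) : ℝ :=
  muInner μ p q + (fun i => eval (ξ i) p) ⬝ᵥ Λ.mulVec (fun i => eval (ξ i) q)

/-- Shift a kernel down by one degree, with the convention `K_{-1} = 0`. -/
def kprev {d : ℕ} (K : ℕ → (Fin d → ℝ) → MvPolynomial (Fin d) ℝ) :
    ℕ → (Fin d → ℝ) → MvPolynomial (Fin d) ℝ
  | 0, _ => 0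
  | n + 1, x => K n x

/-- The matrix `𝐊_n = (K_n(dμ; ξ_i, ξ_j))_{i,j=1}^N` built from a kernel `K`. -/
def bigKmat {d N : ℕ} (ξ : Fin N → (Fin d → ℝ))
    (K : ℕ → (Fin d → ℝ) → MvPolynomial (Fin d) ℝ) (n : ℕ) :
    Matrix (Fin N) (Fin N) ℝ :=
  Matrix.of fun i j => eval (ξ j) (K n (ξ i))

/-- The column vector `𝕂_n(ξ, x) = (K_n(dμ; ξ_1, x), …, K_n(dμ; ξ_N, x))^T`. -/
def vecKmat {d N : ℕ} (ξ : Fin N → (Fin d → ℝ))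
    (K : ℕ → (Fin d → ℝ) → MvPolynomial (Fin d) ℝ) (n : ℕ) (x : Fin d → ℝ) :
    Fin N → ℝ :=
  fun i => eval x (K n (ξ i))

/-! ### Auxiliary lemmas -/

lemma muInner_comm {d : ℕ} (μ : Measure (Fin d → ℝ)) (p q : MvPolynomial (Fin d) ℝ) :
    muInner μ p q = muInner μ q p := by
  unfold muInner; simp_rw [mul_comm]

lemma muInner_sub_left {d : ℕ} (μ : Measure (Fin d → ℝ))
    (hint : ∀ p q : MvPolynomial (Fin d) ℝ, Integrable (fun x => eval x p * eval x q) μ)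
    (p q r : MvPolynomial (Fin d) ℝ) :
    muInner μ (p - q) r = muInner μ p r - muInner μ q r := by
  unfold muInner
  simp_rw [map_sub, sub_mul]
  exact integral_sub (hint p r) (hint q r)

lemma muInner_sum_smul_left {d N : ℕ} (μ : Measure (Fin d → ℝ))
    (hint : ∀ p q : MvPolynomial (Fin d) ℝ, Integrable (fun x => eval x p * eval x q) μ)
    (a : Fin N → ℝ) (p : Fin N → MvPolynomial (Fin d) ℝ) (r : MvPolynomial (Fin d) ℝ) :
    muInner μ (∑ i, a i • p i) r = ∑ i, a i * muInner μ (p i) r := by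
  unfold muInner
  simp_rw [map_sum, smul_eval, Finset.sum_mul, mul_assoc]
  rw [integral_finset_sum _ (fun i _ => ((hint (p i) r).const_mul (a i)))]
  simp_rw [integral_const_mul]

lemma muInner_self_pos {d : ℕ} (μ : Measure (Fin d → ℝ))
    (hpos : ∀ p : MvPolynomial (Fin d) ℝ, p ≠ 0 → 0 < ∫ x, (eval x p) ^ 2 ∂μ)
    (p : MvPolynomial (Fin d) ℝ) (hp : p ≠ 0) : 0 < muInner μ p p := by
  have := hpos p hp
  simpa [muInner, sq] using this

lemma muInner_self_nonneg {d : ℕ} (μ : Measure (Fin d → ℝ))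
    (p : MvPolynomial (Fin d) ℝ) : 0 ≤ muInner μ p p :=
  integral_nonneg fun x => mul_self_nonneg _

/-- Symmetry of the reproducing kernel. -/
lemma ker_symm {d : ℕ} (μ : Measure (Fin d → ℝ))
    (Kmu : ℕ → (Fin d → ℝ) → MvPolynomial (Fin d) ℝ)
    (hKmuMem : ∀ n x, Kmu n x ∈ piDeg d n)
    (hKmuRep : ∀ n x, ∀ p ∈ piDeg d n, muInner μ (Kmu n x) p = eval x p)
    (n : ℕ) (x y : Fin d → ℝ) :
    eval y (Kmu n x) = eval x (Kmu n y) := by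
  rw [← hKmuRep n y (Kmu n x) (hKmuMem n x), ← hKmuRep n x (Kmu n y) (hKmuMem n y),
    muInner_comm]

/-- The key identity: `K_n(dν; x, ·)` equals `K_n(dμ; x, ·)` corrected by a linear
combination of the `K_n(dμ; ξ_i, ·)`. -/
lemma keval {d N : ℕ}
    (μ : Measure (Fin d → ℝ))
    (hint : ∀ p q : MvPolynomial (Fin d) ℝ, Integrable (fun x => eval x p * eval x q) μ)
    (hpos : ∀ p : MvPolynomial (Fin d) ℝ, p ≠ 0 → 0 < ∫ x, (eval x p) ^ 2 ∂μ)
    (ξ : Fin N → (Fin d → ℝ))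
    (Λ : Matrix (Fin N) (Fin N) ℝ) (hΛ : Λ.PosDef)
    (Kmu : ℕ → (Fin d → ℝ) → MvPolynomial (Fin d) ℝ)
    (hKmuMem : ∀ n x, Kmu n x ∈ piDeg d n)
    (hKmuRep : ∀ n x, ∀ p ∈ piDeg d n, muInner μ (Kmu n x) p = eval x p)
    (Knu : ℕ → (Fin d → ℝ) → MvPolynomial (Fin d) ℝ)
    (hKnuMem : ∀ n x, Knu n x ∈ piDeg d n)
    (hKnuRep : ∀ n x, ∀ p ∈ piDeg d n, nuInner μ ξ Λ (Knu n x) p = eval x p)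
    (n : ℕ) (x y : Fin d → ℝ) :
    eval y (Knu n x) =
      eval y (Kmu n x) - vecKmat ξ Kmu n x ⬝ᵥ
        ((1 + Λ * bigKmat ξ Kmu n)⁻¹ * Λ).mulVec (vecKmat ξ Kmu n y) := by
  classical
  set KK : Matrix (Fin N) (Fin N) ℝ := bigKmat ξ Kmu n with hKK
  have hsym := ker_symm μ Kmu hKmuMem hKmuRep n
  -- symmetry of KK
  have hKt : KKᵀ = KK := by
    ext i j
    simp only [transpose_apply, hKK, bigKmat, of_apply]
    exact hsym (ξ j) (ξ i)
  have hKherm : KK.IsHermitian := by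
    unfold Matrix.IsHermitian
    rw [conjTranspose, hKt]
    ext i j; simp
  -- KK is positive semidefinite
  have hKentry : ∀ i j, KK i j = muInner μ (Kmu n (ξ i)) (Kmu n (ξ j)) := by
    intro i j
    rw [hKmuRep n (ξ i) (Kmu n (ξ j)) (hKmuMem n (ξ j))]
    simp only [hKK, bigKmat, of_apply]
    exact hsym (ξ i) (ξ j)
  have hKpsd : KK.PosSemidef := by
    refine .of_dotProduct_mulVec_nonneg hKherm (fun v => ?_)
    have hstar : star v = v := by ext i; simp
    rw [hstar]
    have hdq : v ⬝ᵥ KK *ᵥ v = muInner μ (∑ i, v i • Kmu n (ξ i)) (∑ i, v i • Kmu n (ξ i)) := by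
      rw [muInner_sum_smul_left μ hint]
      unfold dotProduct mulVec
      refine Finset.sum_congr rfl fun i _ => ?_
      congr 1
      rw [muInner_comm, muInner_sum_smul_left μ hint]
      unfold dotProduct
      refine Finset.sum_congr rfl fun j _ => ?_
      show KK i j * v j = v j * muInner μ (Kmu n (ξ j)) (Kmu n (ξ i))
      rw [hKentry i j, muInner_comm, mul_comm]
    rw [hdq]
    exact muInner_self_nonneg μ _
  -- invertibility facts
  have hΛdet : IsUnit Λ.det := hΛ.det_pos.ne'.isUnit
  set B : Matrix (Fin N) (Fin N) ℝ := Λ⁻¹ + KK with hB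
  have hBpd : B.PosDef := hΛ.inv.add_posSemidef hKpsd
  have hBdet : IsUnit B.det := hBpd.det_pos.ne'.isUnit
  have hΛt : Λᵀ = Λ := by
    ext i j
    have := congrFun (congrFun hΛ.1 i) j
    simpa using this
  have hBt : Bᵀ = B := by
    rw [hB, transpose_add, transpose_nonsing_inv, hΛt, hKt]
  have hBit : B⁻¹ᵀ = B⁻¹ := by rw [transpose_nonsing_inv, hBt]
  have hfact : 1 + Λ * KK = Λ * B := by
    rw [hB, mul_add, Matrix.mul_nonsing_inv Λ hΛdet]
  have hM : (1 + Λ * KK)⁻¹ * Λ = B⁻¹ := by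
    rw [hfact, Matrix.mul_inv_rev, mul_assoc, Matrix.nonsing_inv_mul Λ hΛdet, mul_one]
  -- the correction vector
  set vx : Fin N → ℝ := vecKmat ξ Kmu n x with hvx
  set a : Fin N → ℝ := B⁻¹ *ᵥ vx with ha
  have hBa : B *ᵥ a = vx := by
    rw [ha, mulVec_mulVec, Matrix.mul_nonsing_inv B hBdet, one_mulVec]
  have hkey : a = Λ *ᵥ (vx - KK *ᵥ a) := by
    have h1 : Λ⁻¹ *ᵥ a = vx - KK *ᵥ a := by
      refine eq_sub_of_add_eq ?_
      rw [← add_mulVec, ← hB, hBa]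
    rw [← h1, mulVec_mulVec, Matrix.mul_nonsing_inv Λ hΛdet, one_mulVec]
  -- the candidate kernel
  set G : MvPolynomial (Fin d) ℝ := Kmu n x - ∑ i, a i • Kmu n (ξ i) with hG
  have hGmem : G ∈ piDeg d n := by
    refine Submodule.sub_mem _ (hKmuMem n x) (Submodule.sum_mem _ fun i _ => ?_)
    exact Submodule.smul_mem _ _ (hKmuMem n (ξ i))
  -- evaluations of G at the nodes
  have hGξ : (fun k => eval (ξ k) G) = vx - KK *ᵥ a := by
    ext k
    rw [hG]
    simp only [map_sub, map_sum, smul_eval]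
    rw [hsym x (ξ k)]
    have hs : ∑ i, a i * eval (ξ k) (Kmu n (ξ i)) = (KK *ᵥ a) k := by
      unfold mulVec dotProduct
      refine Finset.sum_congr rfl fun i _ => ?_
      rw [mul_comm]
      congr 1
      show eval (ξ k) (Kmu n (ξ i)) = KK k i
      rw [← hKt]
      rfl
    rw [hs]
    rfl
  -- the flip identity for Λ
  have hflip : ∀ u w : Fin N → ℝ, (Λ *ᵥ u) ⬝ᵥ w = u ⬝ᵥ (Λ *ᵥ w) := by
    intro u w
    rw [dotProduct_comm, dotProduct_mulVec, ← mulVec_transpose, hΛt, dotProduct_comm]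
  -- G has the ν-reproducing property
  have hGrep : ∀ p ∈ piDeg d n, nuInner μ ξ Λ G p = eval x p := by
    intro p hp
    unfold nuInner
    rw [hG, muInner_sub_left μ hint, muInner_sum_smul_left μ hint, hKmuRep n x p hp,
      ← hG, hGξ]
    have h2 : ∑ i, a i * muInner μ (Kmu n (ξ i)) p
        = (vx - KK *ᵥ a) ⬝ᵥ (Λ *ᵥ fun i => eval (ξ i) p) := by
      have h3 : ∑ i, a i * muInner μ (Kmu n (ξ i)) p = a ⬝ᵥ (fun i => eval (ξ i) p) := by
        unfold dotProduct
        refine Finset.sum_congr rfl fun i _ => ?_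
        show a i * muInner μ (Kmu n (ξ i)) p = a i * eval (ξ i) p
        rw [hKmuRep n (ξ i) p hp]
      rw [h3]
      conv_lhs => rw [hkey]
      rw [hflip]
    rw [h2]
    ring
  -- uniqueness: Knu n x = G
  have hqzero : Knu n x - G = 0 := by
    by_contra hne
    have hrep0 : nuInner μ ξ Λ (Knu n x - G) (Knu n x - G) = 0 := by
      have hmem : Knu n x - G ∈ piDeg d n := Submodule.sub_mem _ (hKnuMem n x) hGmem
      have e1 := hKnuRep n x _ hmem
      have e2 := hGrep _ hmem
      have : nuInner μ ξ Λ (Knu n x - G) (Knu n x - G)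
          = nuInner μ ξ Λ (Knu n x) (Knu n x - G) - nuInner μ ξ Λ G (Knu n x - G) := by
        unfold nuInner
        rw [muInner_sub_left μ hint]
        have hev : (fun i => eval (ξ i) (Knu n x - G))
            = (fun i => eval (ξ i) (Knu n x)) - (fun i => eval (ξ i) G) := by
          ext i; simp [map_sub]
        rw [hev, sub_dotProduct]
        ring
      rw [this, e1, e2, sub_self]
    have hposq : 0 < nuInner μ ξ Λ (Knu n x - G) (Knu n x - G) := by
      unfold nuInner
      have h4 : 0 < muInner μ (Knu n x - G) (Knu n x - G) :=
        muInner_self_pos μ hpos _ hne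
      have h5 : 0 ≤ (fun i => eval (ξ i) (Knu n x - G)) ⬝ᵥ
          Λ *ᵥ (fun i => eval (ξ i) (Knu n x - G)) := by
        have := hΛ.posSemidef.dotProduct_mulVec_nonneg (fun i => eval (ξ i) (Knu n x - G))
        have hstar : star (fun i => eval (ξ i) (Knu n x - G))
            = (fun i => eval (ξ i) (Knu n x - G)) := by ext i; simp
        rwa [hstar] at this
      linarith
    rw [hrep0] at hposq
    exact lt_irrefl 0 hposq
  have hKnuG : Knu n x = G := by
    have := sub_eq_zero.mp hqzero
    exact this
  -- conclude
  rw [hKnuG, hG, map_sub, map_sum]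
  simp_rw [smul_eval]
  have hfin : ∑ i, a i * eval y (Kmu n (ξ i)) = a ⬝ᵥ vecKmat ξ Kmu n y := rfl
  rw [hfin, hM, ha]
  congr 1
  rw [dotProduct_mulVec, ← mulVec_transpose, hBit]

/-- For every `j ≥ 0` and all `x, y ∈ ℝ^d`,
`P_j(dν; x, y) = P_j(dμ; x, y) − 𝕂_j(ξ,x)^T (I + Λ𝐊_j)^{−1} Λ 𝕂_j(ξ,y)
  + 𝕂_{j−1}(ξ,x)^T (I + Λ𝐊_{j−1})^{−1} Λ 𝕂_{j−1}(ξ,y)`,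
where `P_j = K_j − K_{j−1}` for each of the two inner products, with the conventions
`K_{-1} = 0`, `𝐊_{-1} = 0`, `𝕂_{-1} = 0`. -/
theorem Pj_kernel_formula
    {d N : ℕ} (hd : 1 ≤ d) (hN : 1 ≤ N)
    (μ : Measure (Fin d → ℝ))
    (hint : ∀ p q : MvPolynomial (Fin d) ℝ,
      Integrable (fun x => eval x p * eval x q) μ)
    (hpos : ∀ p : MvPolynomial (Fin d) ℝ, p ≠ 0 → 0 < ∫ x, (eval x p) ^ 2 ∂μ)
    (ξ : Fin N → (Fin d → ℝ)) (hξ : Function.Injective ξ)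
    (Λ : Matrix (Fin N) (Fin N) ℝ) (hΛ : Λ.PosDef)
    (Kmu : ℕ → (Fin d → ℝ) → MvPolynomial (Fin d) ℝ)
    (hKmuMem : ∀ n x, Kmu n x ∈ piDeg d n)
    (hKmuRep : ∀ n x, ∀ p ∈ piDeg d n, muInner μ (Kmu n x) p = eval x p)
    (Knu : ℕ → (Fin d → ℝ) → MvPolynomial (Fin d) ℝ)
    (hKnuMem : ∀ n x, Knu n x ∈ piDeg d n)
    (hKnuRep : ∀ n x, ∀ p ∈ piDeg d n, nuInner μ ξ Λ (Knu n x) p = eval x p)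
    (j : ℕ) (x y : Fin d → ℝ) :
    eval y (Knu j x) - eval y (kprev Knu j x) =
      (eval y (Kmu j x) - eval y (kprev Kmu j x))
      - vecKmat ξ Kmu j x ⬝ᵥ
          ((1 + Λ * bigKmat ξ Kmu j)⁻¹ * Λ).mulVec (vecKmat ξ Kmu j y)
      + vecKmat ξ (kprev Kmu) j x ⬝ᵥ
          ((1 + Λ * bigKmat ξ (kprev Kmu) j)⁻¹ * Λ).mulVec
            (vecKmat ξ (kprev Kmu) j y) := by
  have hk := keval μ hint hpos ξ Λ hΛ Kmu hKmuMem hKmuRep Knu hKnuMem hKnuRep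
  cases j with
  | zero =>
      have hv : vecKmat ξ (kprev Kmu) 0 x = 0 := by
        ext i; simp [vecKmat, kprev]
      rw [hk 0 x y]
      simp only [kprev, hv, map_zero, zero_dotProduct, sub_zero, add_zero]
  | succ m =>
      have hb : bigKmat ξ (kprev Kmu) (m+1) = bigKmat ξ Kmu m := rfl
      have hv : ∀ z, vecKmat ξ (kprev Kmu) (m+1) z = vecKmat ξ Kmu m z := fun _ => rfl
      have hp : ∀ z, kprev Knu (m+1) z = Knu m z := fun _ => rfl
      have hp' : ∀ z, kprev Kmu (m+1) z = Kmu m z := fun _ => rfl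
      rw [hb, hv, hv, hp, hp', hk (m+1) x y, hk m x y]
      ring
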